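/- For λ > 0, the function f(α) = ln( (1 - α·e^{-1/λ}) / (1 - α) ) - 2α/λ is strictly convex on (0, 1/2]; specifically its second derivative equals (e^{1/λ} - 1)·(e^{1/λ} + 1 - 2α) / ((1-α)²·(e^{1/λ} - α)²), which is strictly positive for α ∈ (0, 1/2]. -/

import Mathlib

open Real

/-- f is strictly convex on (0, 1/2], with explicit positive second
derivative. -/
theorem stmt4 (l : ℝ) (hl : 0 < l)
    (f : ℝ → ℝ)
    (hf : f = fun α => Real.log ((1 - α * Real.exp (-1 / l)) / (1 - α)) - 2 * α / l) :
    StrictConvexOn ℝ (Set.Ioc (0 : ℝ) (1 / 2)) f ∧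
      ∀ α ∈ Set.Ioc (0 : ℝ) (1 / 2),
        deriv (deriv f) α =
          (Real.exp (1 / l) - 1) * (Real.exp (1 / l) + 1 - 2 * α) /
            ((1 - α) ^ 2 * (Real.exp (1 / l) - α) ^ 2) ∧
        0 < (Real.exp (1 / l) - 1) * (Real.exp (1 / l) + 1 - 2 * α) /
            ((1 - α) ^ 2 * (Real.exp (1 / l) - α) ^ 2) := by
  set E := Real.exp (1 / l) with hEdef
  set c := Real.exp (-1 / l) with hcdef
  have hE1 : 1 < E := by
    rw [hEdef, Real.one_lt_exp_iff]
    positivity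
  have hE0 : 0 < E := lt_trans one_pos hE1
  have hc0 : 0 < c := Real.exp_pos _
  have hEc : E * c = 1 := by
    rw [hEdef, hcdef, ← Real.exp_add, show 1 / l + -1 / l = 0 by ring, Real.exp_zero]
  -- positivity facts on Iio 1
  have hpos : ∀ x : ℝ, x < 1 → 0 < 1 - x ∧ 0 < 1 - x * c := by
    intro x hx
    refine ⟨by linarith, ?_⟩
    have h1 : 1 - x * c = (E - x) * c := by
      rw [sub_mul, hEc]
    rw [h1]
    exact mul_pos (by linarith) hc0
  set g : ℝ → ℝ := fun x => Real.log (1 - x * c) - Real.log (1 - x) - 2 * x / l with hgdef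
  set G : ℝ → ℝ := fun x => (1 - x)⁻¹ - c * (1 - x * c)⁻¹ - 2 / l with hGdef
  -- f = g on Iio 1
  have hfg : Set.EqOn f g (Set.Iio 1) := by
    intro x hx
    obtain ⟨h1, h2⟩ := hpos x hx
    simp only [hf, hgdef]
    rw [Real.log_div h2.ne' h1.ne']
  have hev : ∀ x : ℝ, x < 1 → f =ᶠ[nhds x] g :=
    fun x hx => hfg.eventuallyEq_of_mem (isOpen_Iio.mem_nhds hx)
  -- derivative of g
  have hgG : ∀ x : ℝ, x < 1 → HasDerivAt g (G x) x := by
    intro x hx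
    obtain ⟨h1, h2⟩ := hpos x hx
    have inner1 : HasDerivAt (fun x : ℝ => 1 - x * c) (-c) x := by
      simpa using ((hasDerivAt_id x).mul_const c).const_sub 1
    have inner2 : HasDerivAt (fun x : ℝ => 1 - x) (-1) x := by
      simpa using (hasDerivAt_id x).const_sub 1
    have hlog1 : HasDerivAt (fun x : ℝ => Real.log (1 - x * c)) ((1 - x * c)⁻¹ * (-c)) x :=
      by have := (Real.hasDerivAt_log h2.ne').comp x inner1; exact this
    have hlog2 : HasDerivAt (fun x : ℝ => Real.log (1 - x)) ((1 - x)⁻¹ * (-1)) x :=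
      (Real.hasDerivAt_log h1.ne').comp x inner2
    have hlin : HasDerivAt (fun x : ℝ => 2 * x / l) (2 / l) x := by
      simpa using ((hasDerivAt_id x).const_mul 2).div_const l
    have := (hlog1.sub hlog2).sub hlin
    refine this.congr_deriv ?_
    simp only [hGdef]
    ring
  -- derivative of G
  have hGd : ∀ x : ℝ, x < 1 →
      HasDerivAt G ((1 - x)⁻¹ ^ 2 - c ^ 2 * (1 - x * c)⁻¹ ^ 2) x := by
    intro x hx
    obtain ⟨h1, h2⟩ := hpos x hx
    have inner1 : HasDerivAt (fun x : ℝ => 1 - x * c) (-c) x := by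
      simpa using ((hasDerivAt_id x).mul_const c).const_sub 1
    have inner2 : HasDerivAt (fun x : ℝ => 1 - x) (-1) x := by
      simpa using (hasDerivAt_id x).const_sub 1
    have hi1 : HasDerivAt (fun x : ℝ => (1 - x)⁻¹) (-(-1) / (1 - x) ^ 2) x :=
      inner2.inv h1.ne'
    have hi2 : HasDerivAt (fun x : ℝ => c * (1 - x * c)⁻¹) (c * (-(-c) / (1 - x * c) ^ 2)) x :=
      (inner1.inv h2.ne').const_mul c
    have := (hi1.sub hi2).sub (hasDerivAt_const x (2 / l))
    refine this.congr_deriv ?_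
    field_simp
    ring
  -- second derivative of f on Iio 1
  have hderiv1 : Set.EqOn (deriv f) (deriv g) (Set.Iio 1) :=
    fun x hx => (hev x hx).deriv_eq
  have hderivgG : Set.EqOn (deriv g) G (Set.Iio 1) :=
    fun x hx => (hgG x hx).deriv
  have hsnd : ∀ x : ℝ, x < 1 →
      deriv (deriv f) x = (1 - x)⁻¹ ^ 2 - c ^ 2 * (1 - x * c)⁻¹ ^ 2 := by
    intro x hx
    have e1 : deriv f =ᶠ[nhds x] deriv g :=
      hderiv1.eventuallyEq_of_mem (isOpen_Iio.mem_nhds hx)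
    have e2 : deriv g =ᶠ[nhds x] G :=
      hderivgG.eventuallyEq_of_mem (isOpen_Iio.mem_nhds hx)
    rw [e1.deriv_eq, e2.deriv_eq, (hGd x hx).deriv]
  -- algebraic identity
  have halg : ∀ x : ℝ, x < 1 →
      (1 - x)⁻¹ ^ 2 - c ^ 2 * (1 - x * c)⁻¹ ^ 2 =
        (E - 1) * (E + 1 - 2 * x) / ((1 - x) ^ 2 * (E - x) ^ 2) := by
    intro x hx
    obtain ⟨h1, _⟩ := hpos x hx
    have hEx : (0 : ℝ) < E - x := by linarith
    have h3 : 1 - x * c = (E - x) * c := by rw [sub_mul, hEc]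
    rw [h3]
    have hcne : c ≠ 0 := hc0.ne'
    field_simp
    ring
  -- positivity
  have hposval : ∀ x : ℝ, x ≤ 1 / 2 →
      0 < (E - 1) * (E + 1 - 2 * x) / ((1 - x) ^ 2 * (E - x) ^ 2) := by
    intro x hx
    have hx1 : x < 1 := by linarith
    apply div_pos
    · apply mul_pos (by linarith) (by linarith)
    · exact mul_pos (pow_pos (by linarith) 2) (pow_pos (by linarith) 2)
  constructor
  · apply strictConvexOn_of_deriv2_pos (convex_Ioc 0 (1 / 2))
    · intro x hx
      have hx1 : x < 1 := by
        rcases hx with ⟨_, hx2⟩; linarith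
      have : HasDerivAt f (G x) x := (hgG x hx1).congr_of_eventuallyEq (hev x hx1)
      exact this.differentiableAt.continuousAt.continuousWithinAt
    · intro x hx
      rw [interior_Ioc] at hx
      have hx1 : x < 1 := by
        rcases hx with ⟨_, hx2⟩; linarith
      have h2 : deriv^[2] f x = deriv (deriv f) x := by
        simp [Function.iterate_succ, Function.iterate_zero]
      rw [h2, hsnd x hx1, halg x hx1]
      exact hposval x (le_of_lt hx.2)
  · intro x hx
    have hx1 : x < 1 := by
      rcases hx with ⟨_, hx2⟩; linarith
    exact ⟨by rw [hsnd x hx1, halg x hx1], hposval x hx.2⟩
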